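/- Let m(p) = f + gᵀp + (1/2)pᵀBp with B symmetric satisfying λ_min(B) ≥ λ₁ > 0 and ‖B‖ ≤ λ_n, and suppose p satisfies m(0) - m(p) ≥ τ(m(0) - m(p^C)) where p^C is the Cauchy point for radius Δ ≥ ‖p‖ and τ ∈ (0,1). If also ‖p‖ ≤ (2/λ₁)‖g‖, then m(0) - m(p) ≥ (1/2)ω‖p‖² where ω = τ min{λ₁/(2β), 1}(λ₁/2) and β = 1 + λ_n. -/

import Mathlib

open scoped RealInnerProductSpace

theorem stmt_12 (n : ℕ) (f l1 ln τ Δ : ℝ)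
    (hl1 : 0 < l1) (hln : l1 ≤ ln) (hτ0 : 0 < τ) (hτ1 : τ < 1) (hΔ : 0 < Δ)
    (g : EuclideanSpace ℝ (Fin n)) (hg : g ≠ 0)
    (B : EuclideanSpace ℝ (Fin n) →L[ℝ] EuclideanSpace ℝ (Fin n))
    (hBsym : ∀ u v, ⟪B u, v⟫ = ⟪u, B v⟫)
    (hBlow : ∀ v, l1 * ‖v‖ ^ 2 ≤ ⟪v, B v⟫) (hBnorm : ‖B‖ ≤ ln)
    (m : EuclideanSpace ℝ (Fin n) → ℝ)
    (hm : ∀ q, m q = f + ⟪g, q⟫ + (1 / 2) * ⟪q, B q⟫)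
    (p pC : EuclideanSpace ℝ (Fin n)) (hpΔ : ‖p‖ ≤ Δ)
    (hCauchy : m 0 - m pC ≥ (1 / 2) * ‖g‖ * min (‖g‖ / (1 + ln)) Δ)
    (hfrac : m 0 - m p ≥ τ * (m 0 - m pC))
    (hplen : ‖p‖ ≤ (2 / l1) * ‖g‖) :
    m 0 - m p ≥ (1 / 2) * (τ * min (l1 / (2 * (1 + ln))) 1 * (l1 / 2)) * ‖p‖ ^ 2 := by
  have hβ : (0:ℝ) < 1 + ln := by linarith
  have hp0 : (0:ℝ) ≤ ‖p‖ := norm_nonneg p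
  have hg0 : (0:ℝ) ≤ ‖g‖ := norm_nonneg g
  have hg2 : l1 / 2 * ‖p‖ ≤ ‖g‖ := by
    have := mul_le_mul_of_nonneg_left hplen (le_of_lt (by positivity : (0:ℝ) < l1/2))
    have h2 : l1 / 2 * ((2 / l1) * ‖g‖) = ‖g‖ := by field_simp
    linarith [h2 ▸ this]
  have hmin : min (l1 / (2 * (1 + ln))) 1 * ‖p‖ ≤ min (‖g‖ / (1 + ln)) Δ := by
    apply le_min
    · have h1 : min (l1 / (2 * (1 + ln))) 1 * ‖p‖ ≤ l1 / (2 * (1 + ln)) * ‖p‖ :=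
        mul_le_mul_of_nonneg_right (min_le_left _ _) hp0
      have h2 : l1 / (2 * (1 + ln)) * ‖p‖ ≤ ‖g‖ / (1 + ln) := by
        rw [div_mul_eq_mul_div, div_le_div_iff₀ (by positivity) hβ]
        nlinarith
      linarith
    · have h1 : min (l1 / (2 * (1 + ln))) 1 * ‖p‖ ≤ 1 * ‖p‖ :=
        mul_le_mul_of_nonneg_right (min_le_right _ _) hp0
      linarith
  have hmin0 : (0:ℝ) ≤ min (l1 / (2 * (1 + ln))) 1 := le_min (by positivity) one_pos.le
  have hchain : m 0 - m p ≥ τ * ((1 / 2) * ‖g‖ * min (‖g‖ / (1 + ln)) Δ) := by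
    have := mul_le_mul_of_nonneg_left hCauchy hτ0.le
    linarith
  have hfinal : (1 / 2) * (τ * min (l1 / (2 * (1 + ln))) 1 * (l1 / 2)) * ‖p‖ ^ 2 ≤
      τ * ((1 / 2) * ‖g‖ * min (‖g‖ / (1 + ln)) Δ) := by
    have key : min (l1 / (2 * (1 + ln))) 1 * ‖p‖ * (l1 / 2 * ‖p‖) ≤
        min (‖g‖ / (1 + ln)) Δ * ‖g‖ := by
      apply mul_le_mul hmin hg2 (by positivity) (le_trans (by positivity) hmin)
    nlinarith [mul_le_mul_of_nonneg_left key hτ0.le]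
  linarith
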